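/- For n, k ∈ ℕ with n, k ≥ 1 define functions on [0,∞): e_n(t) := 1 if n−1 ≤ t < n and 0 otherwise; u_{n,k}(t) := n·t if 0 ≤ t ≤ 1/n, 1/k if t = n + 1/k, and 0 otherwise. Let X := span{e_n, u_{n,k} | n, k ≥ 1} ⊆ ℝ^{[0,∞)}, ordered pointwise. Let b₁ := 2·u_{1,2} and b₂ := e₂. Then: (a) 0 < b₁ and 0 < b₂; (b) the set of common upper bounds in X of {b₁ − b₂, b₂ − b₁} is not equal to the set of common upper bounds in X of {b₁ + b₂, −(b₁ + b₂)} (in particular v := 2·u_{1,3} + e₂ belongs to the first set but not the second); and (c) there exists no x ∈ X with 0 < x, x ≤ b₁ and x ≤ b₂. Consequently X is an Archimedean pre-Riesz space that is not weakly pervasive. -/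

import Mathlib

/-- The function `e_n` on `[0,∞)`: `e_n(t) = 1` if `n - 1 ≤ t < n`, and `0` otherwise. -/
noncomputable def e13 (n : ℕ) : {t : ℝ // 0 ≤ t} → ℝ := fun t =>
  if (n : ℝ) - 1 ≤ (t : ℝ) ∧ (t : ℝ) < (n : ℝ) then 1 else 0

/-- The function `u_{n,k}` on `[0,∞)`: `u_{n,k}(t) = n·t` for `0 ≤ t ≤ 1/n`,
`u_{n,k}(t) = 1/k` for `t = n + 1/k`, and `0` otherwise. -/
noncomputable def u13 (n k : ℕ) : {t : ℝ // 0 ≤ t} → ℝ := fun t =>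
  if (t : ℝ) ≤ 1 / (n : ℝ) then (n : ℝ) * (t : ℝ)
  else if (t : ℝ) = (n : ℝ) + 1 / (k : ℝ) then 1 / (k : ℝ) else 0

/-- The subspace `X = span {e_n, u_{n,k} | n, k ≥ 1}` of `ℝ^{[0,∞)}`. -/
noncomputable def X13 : Submodule ℝ ({t : ℝ // 0 ≤ t} → ℝ) :=
  Submodule.span ℝ
    ({f | ∃ n : ℕ, 1 ≤ n ∧ f = e13 n} ∪
      {f | ∃ n k : ℕ, 1 ≤ n ∧ 1 ≤ k ∧ f = u13 n k})

/-- `b₁ := 2 u_{1,2}`. -/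
noncomputable def b₁13 : {t : ℝ // 0 ≤ t} → ℝ := (2 : ℝ) • u13 1 2

/-- `b₂ := e₂`. -/
noncomputable def b₂13 : {t : ℝ // 0 ≤ t} → ℝ := e13 2

/-- `v := 2 u_{1,3} + e₂`. -/
noncomputable def v13 : {t : ℝ // 0 ≤ t} → ℝ := (2 : ℝ) • u13 1 3 + e13 2

private abbrev PT : Type := {t : ℝ // 0 ≤ t}

private lemma e13_nonneg (n : ℕ) (t : PT) : 0 ≤ e13 n t := by
  unfold e13; split_ifs <;> norm_num

private lemma u13_nonneg (n k : ℕ) (t : PT) : 0 ≤ u13 n k t := by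
  unfold u13; split_ifs
  · exact mul_nonneg (by positivity) t.2
  · positivity
  · exact le_refl 0

private lemma e13_eval (n m : ℕ) (t : PT) (h1 : (m:ℝ) - 1 ≤ t) (h2 : (t:ℝ) < m) :
    e13 n t = if n = m then 1 else 0 := by
  unfold e13
  rcases eq_or_ne n m with rfl | h
  · rw [if_pos ⟨h1, h2⟩, if_pos rfl]
  · rw [if_neg, if_neg h]
    rintro ⟨a, b⟩
    have h1' : (n:ℝ) < (m:ℝ) + 1 := by linarith
    have h2' : (m:ℝ) < (n:ℝ) + 1 := by linarith
    have e1 : n < m + 1 := by exact_mod_cast h1'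
    have e2 : m < n + 1 := by exact_mod_cast h2'
    omega

private lemma u13_slope (n k : ℕ) (hn : 1 ≤ n) (t : PT) (h1 : 1/2 < (t:ℝ)) (h2 : (t:ℝ) ≤ 1) :
    u13 n k t = if n = 1 then (t:ℝ) else 0 := by
  unfold u13
  rcases eq_or_ne n 1 with rfl | h
  · rw [if_pos (by push_cast; linarith), if_pos rfl]; push_cast; ring
  · have h2n : (2:ℝ) ≤ n := by exact_mod_cast (by omega : 2 ≤ n)
    have hinv : (1:ℝ)/n ≤ 1/2 := by
      rw [div_le_div_iff₀ (by linarith) (by norm_num)]; linarith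
    have hk0 : (0:ℝ) ≤ 1/(k:ℝ) := by positivity
    rw [if_neg (by linarith), if_neg (by intro hc; linarith), if_neg h]

private lemma u13_spike (n k j : ℕ) (hn : 1 ≤ n) (hk : 1 ≤ k) (hj : 1 ≤ j) (t : PT)
    (ht : (t:ℝ) = 1 + 1/(j:ℝ)) :
    u13 n k t = if n = 1 ∧ k = j then 1/(j:ℝ) else 0 := by
  have hj1 : (1:ℝ) ≤ j := by exact_mod_cast hj
  have hjpos : (0:ℝ) < 1/j := by positivity
  have hjle : (1:ℝ)/j ≤ 1 := by rw [div_le_one (by linarith)]; exact hj1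
  have hk1 : (1:ℝ) ≤ k := by exact_mod_cast hk
  have hkpos : (0:ℝ) < 1/k := by positivity
  have hn1 : (1:ℝ) ≤ n := by exact_mod_cast hn
  have h1n : (1:ℝ)/n ≤ 1 := by rw [div_le_one (by linarith)]; exact hn1
  unfold u13
  rw [if_neg (by rw [ht]; intro hc; linarith)]
  rcases eq_or_ne n 1 with rfl | hne
  · rcases eq_or_ne k j with rfl | hkj
    · rw [if_pos (by rw [ht]; push_cast; ring), if_pos ⟨rfl, rfl⟩]
    · rw [if_neg, if_neg (by rintro ⟨-, h⟩; exact hkj h)]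
      rw [ht]; push_cast; intro hc
      have hjk : (1:ℝ)/j = 1/k := by linarith
      field_simp at hjk
      exact hkj (by exact_mod_cast hjk)
  · have h2n : (2:ℝ) ≤ n := by exact_mod_cast (by omega : 2 ≤ n)
    rw [if_neg, if_neg (fun hc => hne hc.1)]
    rw [ht]; intro hc
    linarith

private lemma u13_p19 (n k : ℕ) (hn : 1 ≤ n) (hk : 1 ≤ k) (t : PT) (ht : (t:ℝ) = 19/10) :
    u13 n k t = 0 := by
  have hn1 : (1:ℝ) ≤ n := by exact_mod_cast hn
  have hk1 : (1:ℝ) ≤ k := by exact_mod_cast hk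
  have h1n : (1:ℝ)/n ≤ 1 := by rw [div_le_one (by linarith)]; exact hn1
  have hkpos : (0:ℝ) < 1/k := by positivity
  unfold u13
  rw [if_neg (by rw [ht]; intro hc; linarith), if_neg]
  rw [ht]; intro hc
  rcases eq_or_ne n 1 with rfl | hne
  · have hh : (1:ℝ)/k = 9/10 := by push_cast at hc; linarith
    rw [div_eq_div_iff (by linarith) (by norm_num)] at hh
    have : 10 = 9 * k := by exact_mod_cast (by linarith : (10:ℝ) = 9 * k)
    omega
  · have h2n : (2:ℝ) ≤ n := by exact_mod_cast (by omega : 2 ≤ n)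
    linarith

private lemma u13_p29 (n k : ℕ) (hn : 1 ≤ n) (hk : 1 ≤ k) (t : PT) (ht : (t:ℝ) = 29/10) :
    u13 n k t = 0 := by
  have hn1 : (1:ℝ) ≤ n := by exact_mod_cast hn
  have hk1 : (1:ℝ) ≤ k := by exact_mod_cast hk
  have h1n : (1:ℝ)/n ≤ 1 := by rw [div_le_one (by linarith)]; exact hn1
  have hkpos : (0:ℝ) < 1/k := by positivity
  have hkle : (1:ℝ)/k ≤ 1 := by rw [div_le_one (by linarith)]; exact hk1
  unfold u13
  rw [if_neg (by rw [ht]; intro hc; linarith), if_neg]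
  rw [ht]; intro hc
  rcases eq_or_ne n 1 with rfl | hne
  · push_cast at hc; linarith
  · rcases eq_or_ne n 2 with rfl | hne2
    · have hh : (1:ℝ)/k = 9/10 := by push_cast at hc; linarith
      rw [div_eq_div_iff (by linarith) (by norm_num)] at hh
      have : 10 = 9 * k := by exact_mod_cast (by linarith : (10:ℝ) = 9 * k)
      omega
    · have h3n : (3:ℝ) ≤ n := by exact_mod_cast (by omega : 3 ≤ n)
      linarith

private lemma u13_half (n k : ℕ) (hn : 1 ≤ n) (t : PT) (ht : (t:ℝ) = 1/(2*(n:ℝ))) :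
    u13 n k t = 1/2 := by
  have hn1 : (1:ℝ) ≤ n := by exact_mod_cast hn
  have hn0 : (0:ℝ) < n := by linarith
  unfold u13
  rw [if_pos (by rw [ht, div_le_div_iff₀ (by positivity) hn0]; nlinarith), ht]
  field_simp

private lemma e13_ne_u13 (m n k : ℕ) (hn : 1 ≤ n) : e13 m ≠ u13 n k := by
  intro h
  have hn1 : (1:ℝ) ≤ n := by exact_mod_cast hn
  have hn0 : (0:ℝ) < n := by linarith
  have := congrFun h ⟨1/(2*(n:ℝ)), by positivity⟩
  rw [u13_half n k hn _ rfl] at this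
  unfold e13 at this
  split_ifs at this <;> norm_num at this

private lemma e13_inj {n m : ℕ} (hn : 1 ≤ n) (hm : 1 ≤ m) (h : e13 n = e13 m) : n = m := by
  have hm1 : (1:ℝ) ≤ m := by exact_mod_cast hm
  have := congrFun h ⟨(m:ℝ) - 1/2, by linarith⟩
  rw [e13_eval n m _ (by show (m:ℝ) - 1 ≤ (m:ℝ) - 1/2; linarith)
        (by show (m:ℝ) - 1/2 < m; linarith),
      e13_eval m m _ (by show (m:ℝ) - 1 ≤ (m:ℝ) - 1/2; linarith)
        (by show (m:ℝ) - 1/2 < m; linarith), if_pos rfl] at this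
  split_ifs at this with hc
  · exact hc
  · norm_num at this

private lemma u13_one_inj {k j : ℕ} (hk : 1 ≤ k) (hj : 1 ≤ j) (h : u13 1 k = u13 1 j) : k = j := by
  by_contra hne
  have hj1 : (1:ℝ) ≤ j := by exact_mod_cast hj
  have := congrFun h ⟨1 + 1/(j:ℝ), by positivity⟩
  rw [u13_spike 1 k j le_rfl hk hj _ rfl, u13_spike 1 j j le_rfl hj hj _ rfl,
      if_neg (by simp [hne]), if_pos ⟨rfl, rfl⟩] at this
  have : (0:ℝ) < 1/j := by positivity
  linarith [this]

private lemma u13_ne_u13_one {n k j : ℕ} (hn : 2 ≤ n) (hk : 1 ≤ k) (hj : 1 ≤ j) :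
    u13 n k ≠ u13 1 j := by
  intro h
  have := congrFun h ⟨5/8, by norm_num⟩
  rw [u13_slope n k (by omega) _ (by show (1:ℝ)/2 < 5/8; norm_num) (by show (5:ℝ)/8 ≤ 1; norm_num),
      u13_slope 1 j le_rfl _ (by show (1:ℝ)/2 < 5/8; norm_num) (by show (5:ℝ)/8 ≤ 1; norm_num),
      if_neg (by omega), if_pos rfl] at this
  norm_num at this

private def IsGen13 (f : PT → ℝ) : Prop :=
  (∃ n : ℕ, 1 ≤ n ∧ f = e13 n) ∨ (∃ n k : ℕ, 1 ≤ n ∧ 1 ≤ k ∧ f = u13 n k)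

open scoped Classical

private lemma gen_p19 {f : PT → ℝ} (hf : IsGen13 f) (t : PT) (ht : (t:ℝ) = 19/10) :
    f t = if f = e13 2 then 1 else 0 := by
  rcases hf with ⟨n, hn, rfl⟩ | ⟨n, k, hn, hk, rfl⟩
  · rw [e13_eval n 2 t (by rw [ht]; norm_num) (by rw [ht]; norm_num)]
    rcases eq_or_ne n 2 with rfl | h
    · simp
    · rw [if_neg h, if_neg (fun hc => h (e13_inj hn (by norm_num) hc))]
  · rw [u13_p19 n k hn hk t ht, if_neg (Ne.symm (e13_ne_u13 2 n k hn))]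

private lemma gen_p29 {f : PT → ℝ} (hf : IsGen13 f) (t : PT) (ht : (t:ℝ) = 29/10) :
    f t = if f = e13 3 then 1 else 0 := by
  rcases hf with ⟨n, hn, rfl⟩ | ⟨n, k, hn, hk, rfl⟩
  · rw [e13_eval n 3 t (by rw [ht]; norm_num) (by rw [ht]; norm_num)]
    rcases eq_or_ne n 3 with rfl | h
    · simp
    · rw [if_neg h, if_neg (fun hc => h (e13_inj hn (by norm_num) hc))]
  · rw [u13_p29 n k hn hk t ht, if_neg (Ne.symm (e13_ne_u13 3 n k hn))]

private lemma gen_spike {f : PT → ℝ} (hf : IsGen13 f) (j : ℕ) (hj : 2 ≤ j) (t : PT)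
    (ht : (t:ℝ) = 1 + 1/(j:ℝ)) :
    f t = (if f = e13 2 then 1 else 0) + (if f = u13 1 j then (1:ℝ)/(j:ℝ) else 0) := by
  have hj2 : (2:ℝ) ≤ j := by exact_mod_cast hj
  have hjpos : (0:ℝ) < 1/j := by positivity
  have hjhalf : (1:ℝ)/j ≤ 1/2 := by rw [div_le_div_iff₀ (by linarith) (by norm_num)]; linarith
  rcases hf with ⟨n, hn, rfl⟩ | ⟨n, k, hn, hk, rfl⟩
  · rw [e13_eval n 2 t (by rw [ht]; push_cast; linarith) (by rw [ht]; push_cast; linarith),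
        if_neg (e13_ne_u13 n 1 j le_rfl)]
    rcases eq_or_ne n 2 with rfl | h
    · simp
    · rw [if_neg h, if_neg (fun hc => h (e13_inj hn (by norm_num) hc))]; norm_num
  · rw [u13_spike n k j hn hk (by omega) t ht, if_neg (Ne.symm (e13_ne_u13 2 n k hn))]
    rcases eq_or_ne n 1 with rfl | hn1
    · rcases eq_or_ne k j with rfl | hkj
      · rw [if_pos ⟨rfl, rfl⟩, if_pos rfl]; ring
      · rw [if_neg (by simp [hkj]), if_neg (fun hc => hkj (u13_one_inj hk (by omega) hc))]; ring
    · rw [if_neg (by simp [hn1]), if_neg (u13_ne_u13_one (by omega) hk (by omega))]; ring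

private lemma gen_two {f : PT → ℝ} (hf : IsGen13 f) (t : PT) (ht : (t:ℝ) = 2) :
    f t = (if f = e13 3 then 1 else 0) + (if f = u13 1 1 then 1 else 0) := by
  have ht' : (t:ℝ) = 1 + 1/((1:ℕ):ℝ) := by rw [ht]; norm_num
  rcases hf with ⟨n, hn, rfl⟩ | ⟨n, k, hn, hk, rfl⟩
  · rw [e13_eval n 3 t (by rw [ht]; norm_num) (by rw [ht]; norm_num),
        if_neg (e13_ne_u13 n 1 1 le_rfl)]
    rcases eq_or_ne n 3 with rfl | h
    · simp
    · rw [if_neg h, if_neg (fun hc => h (e13_inj hn (by norm_num) hc))]; norm_num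
  · rw [u13_spike n k 1 hn hk le_rfl t ht', if_neg (Ne.symm (e13_ne_u13 3 n k hn))]
    rcases eq_or_ne n 1 with rfl | hn1
    · rcases eq_or_ne k 1 with rfl | hkj
      · rw [if_pos ⟨rfl, rfl⟩, if_pos rfl]; norm_num
      · rw [if_neg (by simp [hkj]), if_neg (fun hc => hkj (u13_one_inj hk le_rfl hc))]; ring
    · rw [if_neg (by simp [hn1]), if_neg (u13_ne_u13_one (by omega) hk le_rfl)]; ring

private lemma gen_comb {f : PT → ℝ} (hf : IsGen13 f) (t₁ t₃ t₅ t₉ : PT)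
    (h1 : (t₁:ℝ) = 1) (h3 : (t₃:ℝ) = 3/4) (h5 : (t₅:ℝ) = 5/8) (h9 : (t₉:ℝ) = 19/10) :
    f t₁ = 8 * f t₃ - 8 * f t₅ + f t₉ := by
  rcases hf with ⟨n, hn, rfl⟩ | ⟨n, k, hn, hk, rfl⟩
  · rw [e13_eval n 2 t₁ (by rw [h1]; norm_num) (by rw [h1]; norm_num),
        e13_eval n 1 t₃ (by rw [h3]; norm_num) (by rw [h3]; norm_num),
        e13_eval n 1 t₅ (by rw [h5]; norm_num) (by rw [h5]; norm_num),
        e13_eval n 2 t₉ (by rw [h9]; norm_num) (by rw [h9]; norm_num)]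
    split_ifs <;> norm_num
  · rw [u13_slope n k hn t₁ (by rw [h1]; norm_num) (by rw [h1]),
        u13_slope n k hn t₃ (by rw [h3]; norm_num) (by rw [h3]; norm_num),
        u13_slope n k hn t₅ (by rw [h5]; norm_num) (by rw [h5]; norm_num),
        u13_p19 n k hn hk t₉ h9, h1, h3, h5]
    split_ifs <;> norm_num

private lemma gen_u1 {f : PT → ℝ} (hf : IsGen13 f) (t₃ t₅ : PT)
    (h3 : (t₃:ℝ) = 3/4) (h5 : (t₅:ℝ) = 5/8) :
    8 * f t₃ - 8 * f t₅ = if (∃ j : ℕ, 1 ≤ j ∧ f = u13 1 j) then 1 else 0 := by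
  rcases hf with ⟨n, hn, rfl⟩ | ⟨n, k, hn, hk, rfl⟩
  · have hcond : ¬∃ j : ℕ, 1 ≤ j ∧ e13 n = u13 1 j := by
      rintro ⟨j, hj, hc⟩
      exact e13_ne_u13 n 1 j le_rfl hc
    rw [e13_eval n 1 t₃ (by rw [h3]; norm_num) (by rw [h3]; norm_num),
        e13_eval n 1 t₅ (by rw [h5]; norm_num) (by rw [h5]; norm_num),
        if_neg hcond]
    split_ifs <;> norm_num
  · rcases eq_or_ne n 1 with rfl | hn1
    · have hcond : ∃ j : ℕ, 1 ≤ j ∧ u13 1 k = u13 1 j := ⟨k, hk, rfl⟩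
      rw [u13_slope 1 k le_rfl t₃ (by rw [h3]; norm_num) (by rw [h3]; norm_num),
          u13_slope 1 k le_rfl t₅ (by rw [h5]; norm_num) (by rw [h5]; norm_num),
          if_pos hcond, h3, h5]
      norm_num
    · have hcond : ¬∃ j : ℕ, 1 ≤ j ∧ u13 n k = u13 1 j := by
        rintro ⟨j, hj, hc⟩
        exact u13_ne_u13_one (by omega) hk hj hc
      rw [u13_slope n k hn t₃ (by rw [h3]; norm_num) (by rw [h3]; norm_num),
          u13_slope n k hn t₅ (by rw [h5]; norm_num) (by rw [h5]; norm_num),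
          if_neg hn1, if_neg hn1, if_neg hcond]
      norm_num

private lemma sum_coeff13 (c : (PT → ℝ) →₀ ℝ) (g : PT → ℝ) (v : ℝ) :
    ∑ f ∈ c.support, c f * (if f = g then v else 0) = c g * v := by
  rw [Finset.sum_eq_single g (fun f _ hne => by rw [if_neg hne, mul_zero])
      (fun hg => by rw [Finsupp.notMem_support_iff.mp hg, zero_mul]), if_pos rfl]

-- value lemmas for b parts
private lemma u12_eval (t : PT) (h1 : 1 < (t:ℝ)) (h2 : (t:ℝ) ≠ 3/2) : u13 1 2 t = 0 := by
  unfold u13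
  rw [if_neg (by push_cast; linarith), if_neg (by push_cast; intro hc; exact h2 (by rw [hc]; norm_num))]

private lemma u12_eval' (t : PT) (h2 : (t:ℝ) = 3/2) : u13 1 2 t = 1/2 := by
  unfold u13
  rw [if_neg (by push_cast; rw [h2]; norm_num), if_pos (by push_cast; rw [h2]; norm_num)]
  norm_num

private lemma u13_3_eval (t : PT) (h1 : 1 < (t:ℝ)) (h2 : (t:ℝ) ≠ 4/3) : u13 1 3 t = 0 := by
  unfold u13
  rw [if_neg (by push_cast; linarith), if_neg (by push_cast; intro hc; exact h2 (by rw [hc]; norm_num))]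

private lemma e2_eval_lt (t : PT) (h : (t:ℝ) < 1) : e13 2 t = 0 := by
  unfold e13
  rw [if_neg]; push_cast; rintro ⟨a, b⟩; linarith

private lemma e2_eval_ge (t : PT) (h : 2 ≤ (t:ℝ)) : e13 2 t = 0 := by
  unfold e13
  rw [if_neg]; push_cast; rintro ⟨a, b⟩; linarith

private lemma e2_eval_mid (t : PT) (h1 : 1 ≤ (t:ℝ)) (h2 : (t:ℝ) < 2) : e13 2 t = 1 := by
  rw [e13_eval 2 2 t (by push_cast; linarith) (by push_cast; linarith), if_pos rfl]


/-- (a) `0 < b₁` and `0 < b₂`; (b) the set of common upper bounds in `X`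
of `{b₁ - b₂, b₂ - b₁}` differs from that of `{b₁ + b₂, -(b₁ + b₂)}`; in particular
`v = 2 u_{1,3} + e₂` belongs to the first set but not the second; (c) there is no `x ∈ X`
with `0 < x`, `x ≤ b₁` and `x ≤ b₂`.  Consequently the Archimedean pre-Riesz space `X` is
not weakly pervasive. -/
theorem statement13 :
    (0 < b₁13 ∧ 0 < b₂13) ∧
    (v13 ∈ X13 ∧ b₁13 - b₂13 ≤ v13 ∧ b₂13 - b₁13 ≤ v13 ∧ ¬(b₁13 + b₂13 ≤ v13)) ∧
    ({w : {t : ℝ // 0 ≤ t} → ℝ | w ∈ X13 ∧ b₁13 - b₂13 ≤ w ∧ b₂13 - b₁13 ≤ w} ≠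
      {w : {t : ℝ // 0 ≤ t} → ℝ | w ∈ X13 ∧ b₁13 + b₂13 ≤ w ∧ -(b₁13 + b₂13) ≤ w}) ∧
    ¬∃ x : {t : ℝ // 0 ≤ t} → ℝ, x ∈ X13 ∧ 0 < x ∧ x ≤ b₁13 ∧ x ≤ b₂13 := by
  -- (c)
  have hnox : ¬∃ x : {t : ℝ // 0 ≤ t} → ℝ, x ∈ X13 ∧ 0 < x ∧ x ≤ b₁13 ∧ x ≤ b₂13 := by
    rintro ⟨x, hxX, hxpos, hxb1, hxb2⟩
    have hx0 : ∀ t : PT, (t:ℝ) ≠ 1 → (t:ℝ) ≠ 3/2 → x t = 0 := by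
      intro t h1 h2
      have hge : (0:ℝ) ≤ x t := hxpos.le t
      have hb1 : x t ≤ 2 * u13 1 2 t := hxb1 t
      have hb2 : x t ≤ e13 2 t := hxb2 t
      rcases lt_or_ge (t:ℝ) 1 with h | h
      · rw [e2_eval_lt t h] at hb2; linarith
      · rcases lt_or_ge (t:ℝ) 2 with h' | h'
        · have ht1 : 1 < (t:ℝ) := lt_of_le_of_ne h (Ne.symm h1)
          rw [u12_eval t ht1 h2] at hb1; linarith
        · rw [e2_eval_ge t h'] at hb2; linarith
    have hx' : x ∈ Submodule.span ℝ
        ({f | ∃ n : ℕ, 1 ≤ n ∧ f = e13 n} ∪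
          {f | ∃ n k : ℕ, 1 ≤ n ∧ 1 ≤ k ∧ f = u13 n k}) := hxX
    obtain ⟨c, hsupp, hsum⟩ := Submodule.mem_span_set.mp hx'
    have hgen : ∀ f ∈ c.support, IsGen13 f := fun f hf => hsupp hf
    have hx : ∀ p : PT, x p = ∑ f ∈ c.support, c f * f p := by
      intro p
      rw [← hsum]
      simp only [Finsupp.sum, Finset.sum_apply, Pi.smul_apply, smul_eq_mul]
    have h34 : x ⟨3/4, by norm_num⟩ = 0 := hx0 _ (by norm_num) (by norm_num)
    have h58 : x ⟨5/8, by norm_num⟩ = 0 := hx0 _ (by norm_num) (by norm_num)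
    have h19 : x ⟨19/10, by norm_num⟩ = 0 := hx0 _ (by norm_num) (by norm_num)
    have h29 : x ⟨29/10, by norm_num⟩ = 0 := hx0 _ (by norm_num) (by norm_num)
    have h2pt : x ⟨2, by norm_num⟩ = 0 := hx0 _ (by norm_num) (by norm_num)
    -- c (e13 2) = 0
    have hA : c (e13 2) = 0 := by
      have h := hx ⟨19/10, by norm_num⟩
      rw [h19, Finset.sum_congr rfl (fun f hf => by rw [gen_p19 (hgen f hf) _ rfl]),
          sum_coeff13] at h
      linarith [h]
    -- c (e13 3) = 0
    have hB : c (e13 3) = 0 := by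
      have h := hx ⟨29/10, by norm_num⟩
      rw [h29, Finset.sum_congr rfl (fun f hf => by rw [gen_p29 (hgen f hf) _ rfl]),
          sum_coeff13] at h
      linarith [h]
    -- c (u13 1 1) = 0
    have hC : c (u13 1 1) = 0 := by
      have h := hx ⟨2, by norm_num⟩
      rw [h2pt, Finset.sum_congr rfl (fun f hf => by rw [gen_two (hgen f hf) _ rfl])] at h
      simp only [mul_add] at h
      rw [Finset.sum_add_distrib, sum_coeff13, sum_coeff13, hB] at h
      linarith [h]
    -- c (u13 1 j) = 0 for j ≥ 3
    have hD : ∀ j : ℕ, 3 ≤ j → c (u13 1 j) = 0 := by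
      intro j hj
      have hj3 : (3:ℝ) ≤ j := by exact_mod_cast hj
      have hjpos : (0:ℝ) < 1/j := by positivity
      have hjle : (1:ℝ)/j ≤ 1/3 := by
        rw [div_le_div_iff₀ (by linarith) (by norm_num)]; linarith
      have hne1 : (1:ℝ) + 1/(j:ℝ) ≠ 1 := by intro hc; linarith
      have hne2 : (1:ℝ) + 1/(j:ℝ) ≠ 3/2 := by intro hc; linarith
      have h0 : x ⟨1 + 1/(j:ℝ), by positivity⟩ = 0 := hx0 _ hne1 hne2
      have h := hx ⟨1 + 1/(j:ℝ), by positivity⟩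
      rw [h0, Finset.sum_congr rfl
          (fun f hf => by rw [gen_spike (hgen f hf) j (by omega) _ rfl])] at h
      simp only [mul_add] at h
      rw [Finset.sum_add_distrib, sum_coeff13, sum_coeff13, hA] at h
      have hmul : c (u13 1 j) * (1/(j:ℝ)) = 0 := by linarith [h]
      rcases mul_eq_zero.mp hmul with h0' | h0'
      · exact h0'
      · exact absurd h0' (by positivity)
    -- c (u13 1 2) = 0
    have hE : c (u13 1 2) = 0 := by
      have key : ∑ f ∈ c.support,
          c f * (if (∃ j : ℕ, 1 ≤ j ∧ f = u13 1 j) then (1:ℝ) else 0) = 0 := by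
        have e1 : ∑ f ∈ c.support,
            c f * (if (∃ j : ℕ, 1 ≤ j ∧ f = u13 1 j) then (1:ℝ) else 0)
            = ∑ f ∈ c.support, c f * (8 * f ⟨3/4, by norm_num⟩ - 8 * f ⟨5/8, by norm_num⟩) := by
          refine Finset.sum_congr rfl fun f hf => ?_
          rw [gen_u1 (hgen f hf) _ _ rfl rfl]
        have e2 : ∑ f ∈ c.support, c f * (8 * f ⟨3/4, by norm_num⟩ - 8 * f ⟨5/8, by norm_num⟩)
            = 8 * ∑ f ∈ c.support, c f * f ⟨3/4, by norm_num⟩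
              - 8 * ∑ f ∈ c.support, c f * f ⟨5/8, by norm_num⟩ := by
          rw [Finset.mul_sum, Finset.mul_sum, ← Finset.sum_sub_distrib]
          exact Finset.sum_congr rfl fun f hf => by ring
        rw [e1, e2, ← hx ⟨3/4, by norm_num⟩, ← hx ⟨5/8, by norm_num⟩, h34, h58]
        ring
      have hfil : ∑ f ∈ c.support.filter (fun f => ∃ j : ℕ, 1 ≤ j ∧ f = u13 1 j), c f = 0 := by
        simp only [mul_ite, mul_one, mul_zero] at key
        rw [Finset.sum_filter]
        exact key
      rw [Finset.sum_eq_single (u13 1 2)] at hfil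
      · exact hfil
      · intro f hf hne
        obtain ⟨hfs, j, hj, rfl⟩ := Finset.mem_filter.mp hf
        rcases (by omega : j = 1 ∨ j = 2 ∨ 3 ≤ j) with rfl | rfl | h3
        · exact hC
        · exact absurd rfl hne
        · exact hD j h3
      · intro hnotmem
        by_cases hmem : u13 1 2 ∈ c.support
        · exact absurd (Finset.mem_filter.mpr ⟨hmem, 2, one_le_two, rfl⟩) hnotmem
        · exact Finsupp.notMem_support_iff.mp hmem
    -- x(1) = 0
    have hx1 : x ⟨1, by norm_num⟩ = 0 := by
      have h := hx ⟨1, by norm_num⟩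
      rw [Finset.sum_congr rfl (fun f hf => by
          rw [gen_comb (hgen f hf) _ ⟨3/4, by norm_num⟩ ⟨5/8, by norm_num⟩
            ⟨19/10, by norm_num⟩ rfl rfl rfl rfl])] at h
      have e2 : ∑ f ∈ c.support,
          c f * (8 * f ⟨3/4, by norm_num⟩ - 8 * f ⟨5/8, by norm_num⟩ + f ⟨19/10, by norm_num⟩)
          = 8 * ∑ f ∈ c.support, c f * f ⟨3/4, by norm_num⟩
            - 8 * ∑ f ∈ c.support, c f * f ⟨5/8, by norm_num⟩
            + ∑ f ∈ c.support, c f * f ⟨19/10, by norm_num⟩ := by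
        rw [Finset.mul_sum, Finset.mul_sum, ← Finset.sum_sub_distrib, ← Finset.sum_add_distrib]
        exact Finset.sum_congr rfl fun f hf => by ring
      rw [e2, ← hx ⟨3/4, by norm_num⟩, ← hx ⟨5/8, by norm_num⟩, ← hx ⟨19/10, by norm_num⟩,
          h34, h58, h19] at h
      rw [h]; ring
    -- x(3/2) = 0
    have hx32 : x ⟨3/2, by norm_num⟩ = 0 := by
      have h := hx ⟨3/2, by norm_num⟩
      rw [Finset.sum_congr rfl (fun f hf => by
          rw [gen_spike (hgen f hf) 2 le_rfl _ (by norm_num)])] at h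
      simp only [mul_add] at h
      rw [Finset.sum_add_distrib, sum_coeff13, sum_coeff13, hA, hE] at h
      rw [h]; ring
    have hzero : x = 0 := by
      funext t
      show x t = 0
      rcases eq_or_ne (t:ℝ) 1 with h | h
      · have ht : t = ⟨1, by norm_num⟩ := Subtype.ext h
        rw [ht]; exact hx1
      · rcases eq_or_ne (t:ℝ) (3/2) with h' | h'
        · have ht : t = ⟨3/2, by norm_num⟩ := Subtype.ext h'
          rw [ht]; exact hx32
        · exact hx0 t h h'
    exact hxpos.ne' hzero
  have hone : ((⟨1, by norm_num⟩ : PT) : ℝ) = 1 := rfl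
  -- (a)
  have hu12one : u13 1 2 ⟨1, by norm_num⟩ = 1 := by
    rw [u13_slope 1 2 le_rfl _ (by rw [hone]; norm_num) (by rw [hone]), if_pos rfl, hone]
  have hb1pos : 0 < b₁13 := by
    refine lt_of_le_of_ne (fun t => ?_) (fun h => ?_)
    · show (0:ℝ) ≤ 2 * u13 1 2 t
      have := u13_nonneg 1 2 t
      linarith
    · have h1 := congrFun h ⟨1, by norm_num⟩
      have : (0:ℝ) = 2 * u13 1 2 ⟨1, by norm_num⟩ := h1
      rw [hu12one] at this
      norm_num at this
  have hb2pos : 0 < b₂13 := by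
    refine lt_of_le_of_ne (fun t => e13_nonneg 2 t) (fun h => ?_)
    have h1 := congrFun h ⟨1, by norm_num⟩
    have : (0:ℝ) = e13 2 ⟨1, by norm_num⟩ := h1
    rw [e2_eval_mid _ (by rw [hone]) (by rw [hone]; norm_num)] at this
    norm_num at this
  -- (b)
  have hvX : v13 ∈ X13 := by
    apply Submodule.add_mem
    · exact Submodule.smul_mem _ _
        (Submodule.subset_span (Or.inr ⟨1, 3, le_rfl, by norm_num, rfl⟩))
    · exact Submodule.subset_span (Or.inl ⟨2, by norm_num, rfl⟩)
  have hle1 : b₁13 - b₂13 ≤ v13 := by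
    intro t
    show 2 * u13 1 2 t - e13 2 t ≤ 2 * u13 1 3 t + e13 2 t
    have h2 := u13_nonneg 1 2 t
    have h3 := u13_nonneg 1 3 t
    have he := e13_nonneg 2 t
    rcases le_or_gt (t:ℝ) 1 with h | h
    · have heq : u13 1 2 t = u13 1 3 t := by
        unfold u13
        rw [if_pos (by push_cast; linarith), if_pos (by push_cast; linarith)]
      rw [heq]; linarith
    · rcases eq_or_ne (t:ℝ) (3/2) with h32 | h32
      · rw [u12_eval' t h32, e2_eval_mid t (by linarith) (by rw [h32]; norm_num)]
        linarith
      · rw [u12_eval t h h32]; linarith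
  have hle2 : b₂13 - b₁13 ≤ v13 := by
    intro t
    show e13 2 t - 2 * u13 1 2 t ≤ 2 * u13 1 3 t + e13 2 t
    have h2 := u13_nonneg 1 2 t
    have h3 := u13_nonneg 1 3 t
    linarith
  have hnot : ¬(b₁13 + b₂13 ≤ v13) := by
    intro hc
    have h := hc ⟨3/2, by norm_num⟩
    have h' : 2 * u13 1 2 ⟨3/2, by norm_num⟩ + e13 2 ⟨3/2, by norm_num⟩
        ≤ 2 * u13 1 3 ⟨3/2, by norm_num⟩ + e13 2 ⟨3/2, by norm_num⟩ := h
    rw [u12_eval' _ rfl, u13_3_eval _ (by norm_num) (by norm_num)] at h'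
    norm_num at h'
  refine ⟨⟨hb1pos, hb2pos⟩, ⟨hvX, hle1, hle2, hnot⟩, ?_, hnox⟩
  intro hSetEq
  have hv1 : v13 ∈ {w : {t : ℝ // 0 ≤ t} → ℝ | w ∈ X13 ∧ b₁13 - b₂13 ≤ w ∧ b₂13 - b₁13 ≤ w} :=
    ⟨hvX, hle1, hle2⟩
  rw [hSetEq] at hv1
  exact hnot hv1.2.1
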